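/- arXiv:1908.00869 — 4 statements merged into one kernel-verified Lean document; each statement's English description precedes it below -/
import Mathlib

section
/- Let u be a subsolution of H = a for some a ∈ ℝ and let K ⊂ ℝ^N be compact. Then there exists a subsolution v of H = a that is constant outside some compact subset of ℝ^N and coincides with u on K. -/
open MeasureTheory Set
open scoped RealInnerProductSpace

noncomputable section

abbrev Euc (N : ℕ) := EuclideanSpace ℝ (Fin N)

/-- `u` is an (a.e.) subsolution of `H = a` in `ℝ^N`. -/
def IsSubsol {N : ℕ} (H : Euc N × Euc N → ℝ) (a : ℝ) (u : Euc N → ℝ) : Prop :=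
  LocallyLipschitz u ∧
    ∀ᵐ x : Euc N ∂volume, DifferentiableAt ℝ u x → H (x, gradient u x) ≤ a

/-- `u` is an (a.e.) subsolution of the discounted equation `λ u + H(x,Du) = 0`. -/
def IsDiscSubsol {N : ℕ} (H : Euc N × Euc N → ℝ) (lam : ℝ) (u : Euc N → ℝ) : Prop :=
  LocallyLipschitz u ∧
    ∀ᵐ x : Euc N ∂volume, DifferentiableAt ℝ u x →
      lam * u x + H (x, gradient u x) ≤ 0

/-- The Lagrangian associated with `H` via the Fenchel transform. -/
def Lag {N : ℕ} (H : Euc N × Euc N → ℝ) : Euc N × Euc N → ℝ :=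
  fun z => sSup (Set.range fun p : Euc N => ⟪p, z.2⟫ - H (z.1, p))

/-- `u` is a subsolution for the generalized Lagrangian `Φ`. -/
def SubsolFor {N : ℕ} (Φ : Euc N × Euc N → ℝ) (u : Euc N → ℝ) : Prop :=
  LocallyLipschitz u ∧
    ∀ᵐ x : Euc N ∂volume, DifferentiableAt ℝ u x →
      ∀ q : Euc N, fderiv ℝ u x q ≤ Φ (x, q)

/-- `u` is a `λ`-discounted subsolution for the generalized Lagrangian `Φ`. -/
def DiscSubsolFor {N : ℕ} (lam : ℝ) (Φ : Euc N × Euc N → ℝ) (u : Euc N → ℝ) : Prop :=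
  LocallyLipschitz u ∧
    ∀ᵐ x : Euc N ∂volume, DifferentiableAt ℝ u x →
      ∀ q : Euc N, lam * u x + fderiv ℝ u x q ≤ Φ (x, q)

/-- A Mather measure for the ergodic problem. -/
def MatherMeasure {N : ℕ} (H : Euc N × Euc N → ℝ) (μ : Measure (Euc N × Euc N)) : Prop :=
  IsProbabilityMeasure μ ∧ Integrable (Lag H) μ ∧ (∫ z, Lag H z ∂μ) = 0 ∧
    ∀ Φ : Euc N × Euc N → ℝ, Continuous Φ → BddBelow (Set.range Φ) →
      (∃ u, SubsolFor Φ u) → (Integrable Φ μ → 0 ≤ ∫ z, Φ z ∂μ)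

/-- A `(λ,z)`-Mather measure (relative to the maximal discounted solution `um`). -/
def DiscMatherMeasure {N : ℕ} (H : Euc N × Euc N → ℝ) (lam : ℝ) (z : Euc N)
    (um : Euc N → ℝ) (μ : Measure (Euc N × Euc N)) : Prop :=
  IsProbabilityMeasure μ ∧ Integrable (Lag H) μ ∧ (∫ w, Lag H w ∂μ) = lam * um z ∧
    ∀ Φ : Euc N × Euc N → ℝ, Continuous Φ → BddBelow (Set.range Φ) →
      ∀ u : Euc N → ℝ, DiscSubsolFor lam Φ u →
        (Integrable Φ μ → lam * u z ≤ ∫ w, Φ w ∂μ)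



lemma locLip_ae_diff {N : ℕ} {f : Euc N → ℝ} (hf : LocallyLipschitz f) :
    ∀ᵐ x : Euc N ∂volume, DifferentiableAt ℝ f x := by
  rw [MeasureTheory.ae_iff]
  apply measure_null_of_locally_null
  intro x _
  obtain ⟨K, t, ht, hlip⟩ := hf x
  obtain ⟨r, hr, hballt⟩ := Metric.mem_nhds_iff.mp ht
  refine ⟨Metric.ball x r ∩ {y | ¬ DifferentiableAt ℝ f y}, ?_, ?_⟩
  · rw [inter_comm]
    exact inter_mem_nhdsWithin _ (Metric.ball_mem_nhds x hr)
  · have h1 : ∀ᵐ y : Euc N ∂volume, y ∈ Metric.ball x r →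
        DifferentiableWithinAt ℝ f (Metric.ball x r) y :=
      (hlip.mono hballt).ae_differentiableWithinAt_of_mem
    rw [show (Metric.ball x r ∩ {y | ¬ DifferentiableAt ℝ f y}) = {y | ¬ (y ∈ Metric.ball x r → DifferentiableAt ℝ f y)} by ext y; simp [Classical.not_imp], ← MeasureTheory.ae_iff]
    filter_upwards [h1] with y hy hyb
    exact (hy hyb).differentiableAt (Metric.isOpen_ball.mem_nhds hyb)

lemma norm_gradient' {N : ℕ} (f : Euc N → ℝ) (x : Euc N) :
    ‖gradient f x‖ = ‖fderiv ℝ f x‖ :=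
  LinearIsometryEquiv.norm_map _ _

theorem stmt0 {N : ℕ} (hN : 1 ≤ N) (H : Euc N × Euc N → ℝ)
    (hA1 : Continuous H)
    (hA2conv : ∀ x : Euc N, ConvexOn ℝ Set.univ fun p => H (x, p))
    (hA2coer : ∀ R : ℝ, 0 < R → ∀ C : ℝ, ∃ r : ℝ, ∀ x p : Euc N,
      ‖x‖ ≤ R → r ≤ ‖p‖ → C ≤ H (x, p))
    (hA3 : ∃ ε > (0 : ℝ), ∃ m : ℝ,
      (∃ R : ℝ, ∀ x : Euc N, R ≤ ‖x‖ → ∀ p : Euc N, ‖p‖ ≤ ε → H (x, p) ≤ m) ∧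
      (∃ x₀ : Euc N, ∀ p : Euc N, m < H (x₀, p)))
    (a : ℝ) (u : Euc N → ℝ) (hu : IsSubsol H a u)
    (K : Set (Euc N)) (hK : IsCompact K) :
    ∃ v : Euc N → ℝ, IsSubsol H a v ∧ (∀ x ∈ K, v x = u x) ∧
      ∃ C : Set (Euc N), IsCompact C ∧ ∃ c : ℝ, ∀ x ∉ C, v x = c := by
  classical
  obtain ⟨hLip, haeu⟩ := hu
  obtain ⟨ε, hε, m, ⟨R₀, hR₀⟩, x₀, hx₀⟩ := hA3
  have hucont : Continuous u := hLip.continuous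
  -- the good a.e. set
  have hG : ∀ᵐ x : Euc N ∂volume,
      DifferentiableAt ℝ u x ∧ H (x, gradient u x) ≤ a := by
    filter_upwards [locLip_ae_diff hLip, haeu] with x h1 h2 using ⟨h1, h2 h1⟩
  -- Step 1 : m < a
  obtain ⟨Kc, t, ht, hlipu⟩ := hLip x₀
  obtain ⟨δ, hδ, hballt⟩ := Metric.mem_nhds_iff.mp ht
  have hsel : ∀ n : ℕ, ∃ x : Euc N,
      (DifferentiableAt ℝ u x ∧ H (x, gradient u x) ≤ a) ∧
        x ∈ Metric.ball x₀ (δ / (n + 1)) := by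
    intro n
    have hpos : 0 < volume (Metric.ball x₀ (δ / (n + 1))) := by
      exact Metric.measure_ball_pos volume x₀ (by positivity)
    by_contra hcon
    push_neg at hcon
    have hsub : Metric.ball x₀ (δ / (n + 1)) ⊆
        {x : Euc N | ¬ (DifferentiableAt ℝ u x ∧ H (x, gradient u x) ≤ a)} := by
      intro x hx hGx
      exact absurd hx (hcon x hGx)
    have h0 : volume {x : Euc N | ¬ (DifferentiableAt ℝ u x ∧ H (x, gradient u x) ≤ a)} = 0 :=
      MeasureTheory.ae_iff.mp hG
    exact absurd (measure_mono_null hsub h0) hpos.ne'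
  choose xs hxsG hxsB using hsel
  set p : ℕ → Euc N := fun n => gradient u (xs n) with hp
  have hpKc : ∀ n, p n ∈ Metric.closedBall (0 : Euc N) Kc := by
    intro n
    have hx : xs n ∈ Metric.ball x₀ δ := by
      apply Metric.ball_subset_ball _ (hxsB n)
      apply div_le_self hδ.le
      exact_mod_cast Nat.le_add_left 1 n
    have hb : ‖fderiv ℝ u (xs n)‖ ≤ Kc :=
      (hxsG n).1.hasFDerivAt.le_of_lipschitzOn
        (Metric.isOpen_ball.mem_nhds hx) (hlipu.mono hballt)
    rw [Metric.mem_closedBall, dist_zero_right]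
    rw [hp, norm_gradient']
    exact hb
  obtain ⟨plim, hplim, φ, hφ, htend⟩ :=
    (isCompact_closedBall (0 : Euc N) Kc).tendsto_subseq hpKc
  have hxs : Filter.Tendsto (fun n => xs (φ n)) Filter.atTop (nhds x₀) := by
    rw [tendsto_iff_dist_tendsto_zero]
    apply squeeze_zero (fun n => dist_nonneg) (g := fun n : ℕ => δ / (n + 1))
    · intro n
      have h1 : dist (xs (φ n)) x₀ < δ / (φ n + 1) := by
        simpa [Metric.mem_ball] using hxsB (φ n)
      have h2 : δ / (↑(φ n) + 1 : ℝ) ≤ δ / (↑n + 1 : ℝ) := by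
        have hc : ((n : ℝ) + 1) ≤ ((φ n : ℕ) : ℝ) + 1 := by
          have h := hφ.le_apply (x := n)
          have h' : ((n : ℝ)) ≤ ((φ n : ℕ) : ℝ) := Nat.cast_le.mpr h
          linarith
        exact div_le_div_of_nonneg_left hδ.le (by positivity) hc
      linarith
    · have h3 := (tendsto_const_div_atTop_nhds_zero_nat δ).comp
        (Filter.tendsto_add_atTop_nat 1)
      exact Filter.Tendsto.congr (fun n => by show δ / ((n + 1 : ℕ) : ℝ) = δ / ((n : ℝ) + 1); push_cast; ring) h3
  have hHle : H (x₀, plim) ≤ a := by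
    have hlim : Filter.Tendsto (fun n => H (xs (φ n), p (φ n))) Filter.atTop
        (nhds (H (x₀, plim))) :=
      (hA1.tendsto _).comp (hxs.prodMk_nhds htend)
    exact le_of_tendsto hlim (Filter.Eventually.of_forall fun n => (hxsG (φ n)).2)
  have hma : m < a := lt_of_lt_of_le (hx₀ plim) hHle
  -- Step 2 : construction
  obtain ⟨r, hr⟩ := hK.isBounded.subset_closedBall 0
  set R' : ℝ := max (max R₀ r) 1 with hR'def
  have hR'pos : (0 : ℝ) < R' := lt_of_lt_of_le one_pos (le_max_right _ _)
  have hR₀R' : R₀ ≤ R' := le_trans (le_max_left _ _) (le_max_left _ _)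
  have hKR' : K ⊆ Metric.closedBall 0 R' :=
    hr.trans (Metric.closedBall_subset_closedBall
      (le_trans (le_max_right R₀ r) (le_max_left _ _)))
  have hball_ne : (Metric.closedBall (0 : Euc N) R').Nonempty :=
    ⟨0, by simp [hR'pos.le]⟩
  obtain ⟨zM, hzM, hzMmax⟩ := (isCompact_closedBall (0 : Euc N) R').exists_isMaxOn
    hball_ne hucont.continuousOn
  set M : ℝ := u zM + ε * R' with hMdef
  set ψ : Euc N → ℝ := fun y => M - ε * ‖y‖ with hψdef
  have hψcont : Continuous ψ := by
    apply continuous_const.sub (continuous_const.mul continuous_norm)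
  have hψlip : LipschitzWith ε.toNNReal ψ := by
    apply LipschitzWith.of_dist_le_mul
    intro y z
    rw [Real.dist_eq, dist_eq_norm]
    have h1 : ψ y - ψ z = ε * (‖z‖ - ‖y‖) := by
      show (M - ε * ‖y‖) - (M - ε * ‖z‖) = ε * (‖z‖ - ‖y‖)
      ring
    rw [h1, abs_mul, abs_of_pos hε, Real.coe_toNNReal ε hε.le]
    have h2 : |‖z‖ - ‖y‖| ≤ ‖y - z‖ := by
      rw [abs_sub_comm]
      exact abs_norm_sub_norm_le y z
    nlinarith
  have hψu : ∀ y ∈ Metric.closedBall (0 : Euc N) R', u y ≤ ψ y := by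
    intro y hy
    have h1 : u y ≤ u zM := hzMmax hy
    have h2 : ‖y‖ ≤ R' := by rwa [Metric.mem_closedBall, dist_zero_right] at hy
    have : ε * ‖y‖ ≤ ε * R' := by nlinarith
    show u y ≤ M - ε * ‖y‖
    rw [hMdef]
    linarith
  set w : Euc N → ℝ := fun y => min (u y) (ψ y) with hwdef
  have hwcont : Continuous w := hucont.min hψcont
  obtain ⟨zc, hzc, hzcmin⟩ := (isCompact_closedBall (0 : Euc N) R').exists_isMinOn
    hball_ne hwcont.continuousOn
  set c : ℝ := w zc - 1 with hcdef
  set v : Euc N → ℝ := fun y => max (w y) c with hvdef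
  have hcb : ∀ y ∈ Metric.closedBall (0 : Euc N) R', c < w y := by
    intro y hy
    have h5 : w zc ≤ w y := hzcmin hy
    rw [hcdef]
    linarith
  have hnotball : ∀ y : Euc N, w y ≤ c → R' < ‖y‖ := by
    intro y hy
    by_contra hle
    push_neg at hle
    have : y ∈ Metric.closedBall (0 : Euc N) R' := by
      rw [Metric.mem_closedBall, dist_zero_right]; exact hle
    exact absurd hy (not_le.mpr (hcb y this))
  have hψactive : ∀ y : Euc N, ψ y < u y → R' < ‖y‖ := by
    intro y hy
    by_contra hle
    push_neg at hle
    have hmem : y ∈ Metric.closedBall (0 : Euc N) R' := by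
      rw [Metric.mem_closedBall, dist_zero_right]; exact hle
    exact absurd (hψu y hmem) (not_le.mpr hy)
  refine ⟨v, ⟨?_, ?_⟩, ?_, ?_⟩
  · -- locally Lipschitz
    exact (hLip.min hψlip.locallyLipschitz).max_const c
  · -- a.e. subsolution
    filter_upwards [hG] with x hx hvdiff
    by_cases hwc : c < w x
    · by_cases hψux : u x ≤ ψ x
      · -- v - u has a local max at x
        have hwx : w x = u x := min_eq_left hψux
        have hveq : v x = u x := by
          show max (w x) c = u x
          rw [max_eq_left hwc.le, hwx]
        have hopen : IsOpen {y : Euc N | c < w y} := isOpen_lt continuous_const hwcont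
        have hmax : IsLocalMax (fun y => v y - u y) x := by
          filter_upwards [hopen.mem_nhds hwc] with y hy
          have h1 : v y = w y := max_eq_left hy.le
          have h2 : w y ≤ u y := min_le_left _ _
          show v y - u y ≤ v x - u x
          rw [hveq, h1]
          linarith
        have h0 : fderiv ℝ (fun y => v y - u y) x = 0 := hmax.fderiv_eq_zero
        have hfeq : fderiv ℝ v x = fderiv ℝ u x := by
          have hs := fderiv_fun_sub hvdiff hx.1
          rw [hs] at h0
          exact sub_eq_zero.mp h0
        have hgeq : gradient v x = gradient u x := by
          unfold gradient
          rw [hfeq]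
        rw [hgeq]
        exact hx.2
      · push_neg at hψux
        have hxR : R' < ‖x‖ := hψactive x hψux
        set S : Set (Euc N) := {y | ψ y < u y ∧ c < w y} with hSdef
        have hopenS : IsOpen S :=
          (isOpen_lt hψcont hucont).inter (isOpen_lt continuous_const hwcont)
        have hmemS : x ∈ S := ⟨hψux, hwc⟩
        have heq : Set.EqOn v ψ S := by
          intro y hy
          have hwy : w y = ψ y := min_eq_right hy.1.le
          show max (w y) c = ψ y
          rw [max_eq_left hy.2.le, hwy]
        have hlipv : LipschitzOnWith ε.toNNReal v S := by
          intro y hy z hz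
          rw [heq hy, heq hz]
          exact hψlip y z
        have hnorm : ‖fderiv ℝ v x‖ ≤ ε := by
          have := hvdiff.hasFDerivAt.le_of_lipschitzOn (hopenS.mem_nhds hmemS) hlipv
          rwa [Real.coe_toNNReal ε hε.le] at this
        have hHm : H (x, gradient v x) ≤ m := by
          apply hR₀ x (hR₀R'.trans hxR.le)
          rw [norm_gradient']
          exact hnorm
        linarith
    · push_neg at hwc
      have hvx : v x = c := max_eq_right hwc
      have hmin : IsLocalMin v x := by
        apply Filter.Eventually.of_forall
        intro y
        rw [hvx]
        exact le_max_right _ _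
      have h0 : fderiv ℝ v x = 0 := hmin.fderiv_eq_zero
      have hg0 : gradient v x = 0 := by
        unfold gradient
        rw [h0]
        exact map_zero _
      have hxR : R' < ‖x‖ := hnotball x hwc
      rw [hg0]
      have hHm : H (x, (0 : Euc N)) ≤ m := by
        apply hR₀ x (hR₀R'.trans hxR.le)
        simp [hε.le]
      linarith
  · -- v = u on K
    intro x hxK
    have hmem := hKR' hxK
    have h1 : w x = u x := min_eq_left (hψu x hmem)
    have h2 : c < w x := hcb x hmem
    show max (w x) c = u x
    rw [max_eq_left h2.le, h1]
  · -- constant outside a compact set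
    refine ⟨Metric.closedBall 0 (max R' ((M - c) / ε)), isCompact_closedBall _ _, c, ?_⟩
    intro x hxC
    have hxn : max R' ((M - c) / ε) < ‖x‖ := by
      by_contra hle
      push_neg at hle
      exact hxC (by rw [Metric.mem_closedBall, dist_zero_right]; exact hle)
    have h1 : (M - c) / ε < ‖x‖ := lt_of_le_of_lt (le_max_right _ _) hxn
    have h2 : M - c < ε * ‖x‖ := by
      rw [div_lt_iff₀ hε] at h1
      linarith
    have h3 : ψ x < c := by show M - ε * ‖x‖ < c; linarith
    have h4 : w x ≤ c := le_of_lt (lt_of_le_of_lt (min_le_right _ _) h3)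
    show max (w x) c = c
    exact max_eq_right h4


end
end

section
/- For every R > 0 there exists a constant C_R such that u(x) ≤ C_R for all x with |x| < R, for every λ > 0 and every subsolution u of the discounted equation λu + H(x,Du) = 0; i.e., the family of all subsolutions of the discounted problems, over all discount factors λ > 0, is locally equibounded from above. -/
open MeasureTheory Set
open scoped RealInnerProductSpace

noncomputable section

open Metric Filter
open scoped NNReal

section AuxLemmas

variable {E : Type*} [NormedAddCommGroup E] [NormedSpace ℝ E]

/-- A locally Lipschitz function is Lipschitz on convex compact sets. -/
lemma locLip_exists_lipschitzOnWith {u : E → ℝ} (hu : LocallyLipschitz u)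
    {s : Set E} (hconv : Convex ℝ s) (hcomp : IsCompact s) :
    ∃ K : ℝ≥0, LipschitzOnWith K u s := by
  rcases Set.eq_empty_or_nonempty s with rfl | ⟨z₀, hz₀⟩
  · exact ⟨1, by simp⟩
  have hloc : ∀ w : E, ∃ r : ℝ, 0 < r ∧ ∃ K : ℝ≥0, LipschitzOnWith K u (ball w (2 * r)) := by
    intro w
    obtain ⟨K, t, ht, hK⟩ := hu w
    obtain ⟨r, hr, hball⟩ := Metric.mem_nhds_iff.1 ht
    refine ⟨r / 2, by linarith, K, hK.mono fun z hz => hball ?_⟩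
    simp only [mem_ball] at hz ⊢; linarith
  choose r hr K hK using hloc
  obtain ⟨T, hT⟩ := hcomp.elim_finite_subcover (fun w : E => ball w (r w))
    (fun w => isOpen_ball) (fun x hx => Set.mem_iUnion.2 ⟨x, mem_ball_self (hr x)⟩)
  have hTn : T.Nonempty := by
    rcases Finset.eq_empty_or_nonempty T with rfl | h
    · exfalso; have := hT hz₀; simpa using this
    · exact h
  set K₀ : ℝ≥0 := T.sup' hTn K with hK₀
  set r₀ : ℝ := T.inf' hTn r with hr₀
  have hr₀pos : 0 < r₀ := by
    rw [hr₀, Finset.lt_inf'_iff]; exact fun w _ => hr w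
  have short : ∀ a ∈ s, ∀ b ∈ s, dist a b < r₀ → dist (u a) (u b) ≤ K₀ * dist a b := by
    intro a ha b hb hab
    obtain ⟨w, hwT, hw⟩ : ∃ w ∈ T, a ∈ ball w (r w) := by
      have := hT ha; simpa only [Set.mem_iUnion, exists_prop] using this
    have hr₀w : r₀ ≤ r w := Finset.inf'_le _ hwT
    have hbw : b ∈ ball w (2 * r w) := by
      have h1 : dist b w ≤ dist b a + dist a w := dist_triangle _ _ _
      have h2 : dist b a < r₀ := by rwa [dist_comm]
      simp only [mem_ball] at hw ⊢; linarith
    have haw : a ∈ ball w (2 * r w) := by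
      have : 0 < r w := hr w
      simp only [mem_ball] at hw ⊢; linarith
    calc dist (u a) (u b) ≤ K w * dist a b :=
          (lipschitzOnWith_iff_dist_le_mul.1 (hK w)) a haw b hbw
      _ ≤ K₀ * dist a b := by
          have : (K w : ℝ) ≤ K₀ := by exact_mod_cast Finset.le_sup' _ hwT
          exact mul_le_mul_of_nonneg_right this dist_nonneg
  refine ⟨K₀, lipschitzOnWith_iff_dist_le_mul.2 ?_⟩
  intro a ha b hb
  obtain ⟨n, hn⟩ := exists_nat_gt (dist a b / r₀)
  have hnpos : 0 < n := by
    by_contra h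
    push_neg at h
    interval_cases n
    have : 0 ≤ dist a b / r₀ := div_nonneg dist_nonneg hr₀pos.le
    simp at hn; linarith
  have hnR : (0:ℝ) < n := by exact_mod_cast hnpos
  set p : ℕ → E := fun i => a + ((i : ℝ) / n) • (b - a) with hp
  have hp0 : p 0 = a := by simp [hp]
  have hpn : p n = b := by
    simp [hp, div_self hnR.ne']
  have hps : ∀ i : ℕ, i ≤ n → p i ∈ s := by
    intro i hi
    refine hconv.add_smul_sub_mem ha hb ⟨?_, ?_⟩
    · positivity
    · rw [div_le_one hnR]; exact_mod_cast hi
  have hdiff : ∀ i : ℕ, p (i + 1) - p i = ((1:ℝ) / n) • (b - a) := by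
    intro i
    simp only [hp]
    have : ((i:ℝ)+1) / n = (i:ℝ)/n + 1/n := by ring
    push_cast
    rw [this]
    module
  have hdist : ∀ i : ℕ, dist (p i) (p (i + 1)) = dist a b / n := by
    intro i
    rw [dist_eq_norm', hdiff i, norm_smul, dist_eq_norm]
    rw [Real.norm_eq_abs, abs_div, abs_one, Nat.abs_cast, norm_sub_rev]
    ring
  have hsmall : dist a b / n < r₀ := by
    rw [div_lt_iff₀ hnR]
    have := (div_lt_iff₀ hr₀pos).1 hn
    linarith
  calc dist (u a) (u b) = dist (u (p 0)) (u (p n)) := by rw [hp0, hpn]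
    _ ≤ ∑ i ∈ Finset.range n, dist (u (p i)) (u (p (i + 1))) :=
        dist_le_range_sum_dist (fun i => u (p i)) n
    _ ≤ ∑ i ∈ Finset.range n, (K₀ : ℝ) * (dist a b / n) := by
        refine Finset.sum_le_sum fun i hi => ?_
        have hin : i ≤ n := (Finset.mem_range.1 hi).le
        have hin' : i + 1 ≤ n := Finset.mem_range.1 hi
        have := short (p i) (hps i hin) (p (i + 1)) (hps (i + 1) hin')
          (by rw [hdist i]; exact hsmall)
        rwa [hdist i] at this
    _ = (K₀ : ℝ) * dist a b := by
        rw [Finset.sum_const, Finset.card_range, nsmul_eq_mul]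
        field_simp

variable [MeasurableSpace E] [BorelSpace E] [FiniteDimensional ℝ E]
  [SecondCountableTopology E]

/-- Rademacher's theorem for locally Lipschitz functions. -/
lemma locLip_ae_differentiableAt (μ : Measure E) [μ.IsAddHaarMeasure]
    {u : E → ℝ} (hu : LocallyLipschitz u) :
    ∀ᵐ x ∂μ, DifferentiableAt ℝ u x := by
  have h : ∀ x : E, ∃ r : ℝ, 0 < r ∧ ∃ K : ℝ≥0, LipschitzOnWith K u (ball x r) := by
    intro x
    obtain ⟨K, t, ht, hK⟩ := hu x
    obtain ⟨r, hr, hball⟩ := Metric.mem_nhds_iff.1 ht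
    exact ⟨r, hr, K, hK.mono hball⟩
  choose r hr K hK using h
  obtain ⟨t, htc, htU⟩ := TopologicalSpace.countable_cover_nhds
    (f := fun x => ball x (r x)) (fun x => ball_mem_nhds _ (hr x))
  have hae : ∀ x ∈ t, ∀ᵐ y ∂μ, y ∈ ball x (r x) → DifferentiableAt ℝ u y := by
    intro x _
    filter_upwards [(hK x).ae_differentiableWithinAt_of_mem] with y hy hyb
    exact (hy hyb).differentiableAt (isOpen_ball.mem_nhds hyb)
  filter_upwards [(ae_ball_iff htc).2 hae] with y hy
  have : y ∈ ⋃ x ∈ t, ball x (r x) := by rw [htU]; trivial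
  obtain ⟨x, hxt, hxy⟩ := by simpa only [Set.mem_iUnion, exists_prop] using this
  exact hy x hxt hxy

end AuxLemmas

section SegmentEstimate

variable {N : ℕ}

/-- If a locally Lipschitz function has a.e. gradient bound `L` on an open set `Ω`,
then it satisfies the corresponding Lipschitz estimate along segments contained in `Ω`. -/
lemma segment_est {u : Euc N → ℝ} (hu : LocallyLipschitz u)
    {Ω : Set (Euc N)} (hΩ : IsOpen Ω) {L : ℝ} (hL : 0 ≤ L)
    (hae : ∀ᵐ x ∂(volume : Measure (Euc N)),
      x ∈ Ω → DifferentiableAt ℝ u x → ‖fderiv ℝ u x‖ ≤ L)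
    {a b : Euc N} (hseg : segment ℝ a b ⊆ Ω) :
    |u b - u a| ≤ L * ‖b - a‖ := by
  have hsegcompact : IsCompact (segment ℝ a b) := by
    rw [segment_eq_image]
    exact isCompact_Icc.image (by fun_prop)
  obtain ⟨δ₁, hδ₁pos, hthick⟩ := hsegcompact.exists_thickening_subset_open hΩ hseg
  have hloc : ∀ c : Euc N, ∃ r : ℝ, 0 < r ∧ ∃ K : ℝ≥0, LipschitzOnWith K u (ball c r) := by
    intro c
    obtain ⟨K, t, ht, hK⟩ := hu c
    obtain ⟨r, hr, hball⟩ := Metric.mem_nhds_iff.1 ht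
    exact ⟨r, hr, K, hK.mono hball⟩
  obtain ⟨ra, hra, Ka, hKa⟩ := hloc a
  obtain ⟨rb, hrb, Kb, hKb⟩ := hloc b
  set M : ℝ := (Ka : ℝ) + (Kb : ℝ) + 1 with hM
  have hMpos : 0 < M := by positivity
  have hdiffae := locLip_ae_differentiableAt (volume : Measure (Euc N)) hu
  refine le_of_forall_pos_le_add ?_
  intro η hη
  set δ : ℝ := min (min δ₁ (ra / 2)) (min (rb / 2) (η / M)) with hδ
  have hδpos : 0 < δ := by
    refine lt_min (lt_min hδ₁pos (by linarith)) (lt_min (by linarith) (by positivity))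
  have hδδ₁ : δ ≤ δ₁ := le_trans (min_le_left _ _) (min_le_left _ _)
  have hδra : δ ≤ ra / 2 := le_trans (min_le_left _ _) (min_le_right _ _)
  have hδrb : δ ≤ rb / 2 := le_trans (min_le_right _ _) (min_le_left _ _)
  have hδη : δ ≤ η / M := le_trans (min_le_right _ _) (min_le_right _ _)
  set φ : ContDiffBump (0 : Euc N) := ⟨δ / 2, δ, by positivity, by linarith⟩ with hφ
  set ψ : Euc N → ℝ := φ.normed volume with hψ
  have hψcont : Continuous ψ := φ.continuous_normed
  have hψnonneg : ∀ y, 0 ≤ ψ y := φ.nonneg_normed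
  have hψzero : ∀ y : Euc N, ¬ (‖y‖ < δ) → ψ y = 0 := by
    intro y hy
    apply Function.notMem_support.mp
    rw [hψ, φ.support_normed_eq]
    simpa [mem_ball, dist_eq_norm] using hy
  have hψint : Integrable ψ (volume : Measure (Euc N)) := φ.integrable_normed
  have hψone : ∫ y, ψ y ∂(volume : Measure (Euc N)) = 1 := φ.integral_normed
  set U : Euc N → ℝ := fun x => ∫ y, ψ y • u (x - y) ∂volume with hUdef
  set G : Euc N → (Euc N →L[ℝ] ℝ) := fun x => ∫ y, ψ y • fderiv ℝ u (x - y) ∂volume with hGdef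
  have hcont : ∀ x : Euc N, Continuous fun y => ψ y • u (x - y) := fun x =>
    hψcont.smul (hu.continuous.comp (continuous_const.sub continuous_id))
  have hcs : ∀ x : Euc N, HasCompactSupport fun y => ψ y • u (x - y) := fun x =>
    (φ.hasCompactSupport_normed).smul_right
  have hU : ∀ x₀ : Euc N, HasFDerivAt U (G x₀) x₀ := by
    intro x₀
    obtain ⟨Ku, hKu⟩ := locLip_exists_lipschitzOnWith hu (convex_closedBall x₀ (1 + δ))
      (isCompact_closedBall x₀ (1 + δ))
    have hdiffy : ∀ᵐ y ∂(volume : Measure (Euc N)), DifferentiableAt ℝ u (x₀ - y) :=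
      (Measure.measurePreserving_sub_left volume x₀).quasiMeasurePreserving.ae hdiffae
    have key := hasFDerivAt_integral_of_dominated_loc_of_lip
      (μ := (volume : Measure (Euc N))) (x₀ := x₀)
      (F := fun x y => ψ y • u (x - y)) (F' := fun y => ψ y • fderiv ℝ u (x₀ - y))
      (bound := fun y => ψ y * Ku) (ball_mem_nhds x₀ zero_lt_one)
      (Filter.Eventually.of_forall fun x => (hcont x).aestronglyMeasurable)
      ((hcont x₀).integrable_of_hasCompactSupport (hcs x₀))
      ((hψcont.measurable.smul ((measurable_fderiv ℝ u).comp
        (measurable_const.sub measurable_id))).aestronglyMeasurable)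
      ?_ (hψint.mul_const _) ?_
    · exact key.2
    · refine Filter.Eventually.of_forall fun y => ?_
      by_cases hy : ‖y‖ < δ
      · rw [lipschitzOnWith_iff_dist_le_mul]
        intro x1 h1 x2 h2
        have hd1 : dist (x1 - y) x₀ ≤ 1 + δ := by
          have : dist (x1 - y) x1 = ‖y‖ := by
            rw [dist_eq_norm]; simp
          have h3 := dist_triangle (x1 - y) x1 x₀
          rw [this] at h3
          rw [mem_ball] at h1
          linarith
        have hd2 : dist (x2 - y) x₀ ≤ 1 + δ := by
          have : dist (x2 - y) x2 = ‖y‖ := by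
            rw [dist_eq_norm]; simp
          have h3 := dist_triangle (x2 - y) x2 x₀
          rw [this] at h3
          rw [mem_ball] at h2
          linarith
        have hlip := (lipschitzOnWith_iff_dist_le_mul.1 hKu) (x1 - y)
          (mem_closedBall.2 hd1) (x2 - y) (mem_closedBall.2 hd2)
        have hdxy : dist (x1 - y) (x2 - y) = dist x1 x2 := by
          rw [dist_eq_norm, dist_eq_norm]
          congr 1
          abel
        rw [hdxy] at hlip
        have habs : ((Real.nnabs (ψ y * Ku)) : ℝ) = ψ y * Ku := by
          rw [Real.coe_nnabs]; exact abs_of_nonneg (mul_nonneg (hψnonneg y) Ku.2)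
        rw [habs]
        calc dist (ψ y • u (x1 - y)) (ψ y • u (x2 - y))
            = ψ y * dist (u (x1 - y)) (u (x2 - y)) := by
              rw [dist_eq_norm, dist_eq_norm, smul_eq_mul, smul_eq_mul, ← mul_sub,
                Real.norm_eq_abs, Real.norm_eq_abs, abs_mul, abs_of_nonneg (hψnonneg y)]
          _ ≤ ψ y * (Ku * dist x1 x2) := by
              exact mul_le_mul_of_nonneg_left hlip (hψnonneg y)
          _ = ψ y * Ku * dist x1 x2 := by ring
      · have h0 : ψ y = 0 := hψzero y hy
        rw [lipschitzOnWith_iff_dist_le_mul]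
        intro x1 _ x2 _
        simp [h0]
    · filter_upwards [hdiffy] with y hy
      have h1 : HasFDerivAt (fun x => x - y) (ContinuousLinearMap.id ℝ (Euc N)) x₀ :=
        (hasFDerivAt_id x₀).sub_const y
      have h2 := (hy.hasFDerivAt.comp x₀ h1)
      rw [ContinuousLinearMap.comp_id] at h2
      exact h2.const_smul (ψ y)
  have hGbound : ∀ x ∈ segment ℝ a b, ‖G x‖ ≤ L := by
    intro x hx
    have hmp := (Measure.measurePreserving_sub_left volume x).quasiMeasurePreserving.ae hae
    have hd := (Measure.measurePreserving_sub_left volume x).quasiMeasurePreserving.ae hdiffae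
    have hptwise : ∀ᵐ y ∂(volume : Measure (Euc N)),
        ‖ψ y • fderiv ℝ u (x - y)‖ ≤ ψ y * L := by
      filter_upwards [hmp, hd] with y h1 h2
      by_cases hy : ‖y‖ < δ
      · have hmem : x - y ∈ Ω := by
          apply hthick
          rw [Metric.mem_thickening_iff]
          refine ⟨x, hx, ?_⟩
          rw [dist_eq_norm]
          simp only [sub_sub_cancel_left, norm_neg]
          calc ‖y‖ < δ := hy
            _ ≤ δ₁ := hδδ₁
        rw [norm_smul, Real.norm_of_nonneg (hψnonneg y)]
        exact mul_le_mul_of_nonneg_left (h1 hmem h2) (hψnonneg y)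
      · have h0 : ψ y = 0 := hψzero y hy
        simp [h0]
    calc ‖G x‖ ≤ ∫ y, ‖ψ y • fderiv ℝ u (x - y)‖ ∂volume := norm_integral_le_integral_norm _
      _ ≤ ∫ y, ψ y * L ∂volume :=
          integral_mono_of_nonneg (Filter.Eventually.of_forall fun y => norm_nonneg _)
            (hψint.mul_const _) hptwise
      _ = L := by rw [integral_mul_const, hψone, one_mul]
  have hUVb : ‖U b - U a‖ ≤ L * ‖b - a‖ :=
    Convex.norm_image_sub_le_of_norm_hasFDerivWithin_le
      (fun x hx => (hU x).hasFDerivWithinAt) hGbound (convex_segment a b)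
      (left_mem_segment ℝ a b) (right_mem_segment ℝ a b)
  have happrox : ∀ (c : Euc N) (K : ℝ≥0) (rc : ℝ), 0 < rc → δ ≤ rc / 2 →
      LipschitzOnWith K u (ball c rc) → ‖U c - u c‖ ≤ K * δ := by
    intro c K rc hrc hδrc hKc
    have hint1 : Integrable (fun y => ψ y • u (c - y)) (volume : Measure (Euc N)) :=
      (hcont c).integrable_of_hasCompactSupport (hcs c)
    have hint2 : Integrable (fun y => ψ y • u c) (volume : Measure (Euc N)) :=
      hψint.smul_const _
    have hsub : U c - u c = ∫ y, (ψ y • u (c - y) - ψ y • u c) ∂volume := by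
      rw [integral_sub hint1 hint2, hUdef]
      simp only [integral_smul_const, hψone, one_smul]
    rw [hsub]
    have hptwise : ∀ᵐ y ∂(volume : Measure (Euc N)),
        ‖ψ y • u (c - y) - ψ y • u c‖ ≤ ψ y * ((K : ℝ) * δ) := by
      refine Filter.Eventually.of_forall fun y => ?_
      by_cases hy : ‖y‖ < δ
      · have hm1 : c - y ∈ ball c rc := by
          rw [mem_ball, dist_eq_norm]
          simp only [sub_sub_cancel_left, norm_neg]
          calc ‖y‖ < δ := hy
            _ < rc := by linarith
        have hm2 : c ∈ ball c rc := mem_ball_self hrc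
        have hlip := (lipschitzOnWith_iff_dist_le_mul.1 hKc) (c - y) hm1 c hm2
        have : dist (c - y) c = ‖y‖ := by
          rw [dist_eq_norm]; simp
        rw [this] at hlip
        calc ‖ψ y • u (c - y) - ψ y • u c‖ = ψ y * dist (u (c - y)) (u c) := by
              rw [smul_eq_mul, smul_eq_mul, ← mul_sub, Real.norm_eq_abs, abs_mul,
                abs_of_nonneg (hψnonneg y), dist_eq_norm, Real.norm_eq_abs]
          _ ≤ ψ y * ((K : ℝ) * ‖y‖) := mul_le_mul_of_nonneg_left hlip (hψnonneg y)
          _ ≤ ψ y * ((K : ℝ) * δ) := by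
              refine mul_le_mul_of_nonneg_left ?_ (hψnonneg y)
              exact mul_le_mul_of_nonneg_left hy.le K.2
      · have h0 : ψ y = 0 := hψzero y hy
        simp [h0]
    calc ‖∫ y, (ψ y • u (c - y) - ψ y • u c) ∂volume‖
        ≤ ∫ y, ‖ψ y • u (c - y) - ψ y • u c‖ ∂volume := norm_integral_le_integral_norm _
      _ ≤ ∫ y, ψ y * ((K : ℝ) * δ) ∂volume :=
          integral_mono_of_nonneg (Filter.Eventually.of_forall fun y => norm_nonneg _)
            (hψint.mul_const _) hptwise
      _ = (K : ℝ) * δ := by rw [integral_mul_const, hψone, one_mul]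
  have ha' := happrox a Ka ra hra hδra hKa
  have hb' := happrox b Kb rb hrb hδrb hKb
  have hfin : |u b - u a| ≤ L * ‖b - a‖ + ((Ka : ℝ) + (Kb : ℝ)) * δ := by
    have : u b - u a = -(U b - u b) + (U b - U a) + (U a - u a) := by ring
    rw [this]
    calc |(-(U b - u b) + (U b - U a) + (U a - u a))|
        ≤ |(-(U b - u b) + (U b - U a))| + |U a - u a| := abs_add_le _ _
      _ ≤ |(-(U b - u b))| + |U b - U a| + |U a - u a| := by
          gcongr; exact abs_add_le _ _
      _ ≤ (Kb : ℝ) * δ + L * ‖b - a‖ + (Ka : ℝ) * δ := by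
          gcongr
          · rw [abs_neg]; exact hb'
          · exact hUVb
          · exact ha'
      _ = L * ‖b - a‖ + ((Ka : ℝ) + (Kb : ℝ)) * δ := by ring
  have : ((Ka : ℝ) + (Kb : ℝ)) * δ ≤ η := by
    have h1 : ((Ka : ℝ) + (Kb : ℝ)) * δ ≤ M * δ := by
      refine mul_le_mul_of_nonneg_right (by rw [hM]; linarith) hδpos.le
    have h2 : M * δ ≤ M * (η / M) := mul_le_mul_of_nonneg_left hδη hMpos.le
    rw [mul_div_cancel₀ _ hMpos.ne'] at h2
    linarith
  linarith

/-- Propagation of largeness along segments: if `u` has an a.e. gradient bound `L` on the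
positivity set of `u` intersected with a ball, then the value at a nearby point is controlled. -/
lemma propagate_aux {u : Euc N → ℝ} (hu : LocallyLipschitz u) {ρ L : ℝ} (hL : 0 ≤ L)
    (hae : ∀ᵐ x ∂(volume : Measure (Euc N)),
      x ∈ ({x | 0 < u x} ∩ ball (0 : Euc N) ρ) → DifferentiableAt ℝ u x → ‖fderiv ℝ u x‖ ≤ L)
    {xb y : Euc N} (hxb : ‖xb‖ < ρ) (hy : ‖y‖ < ρ)
    (hbig : L * ‖y - xb‖ + 1 < u xb) :
    u xb - L * ‖y - xb‖ ≤ u y := by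
  set Ω : Set (Euc N) := {x | 0 < u x} ∩ ball (0 : Euc N) ρ with hΩdef
  have hΩopen : IsOpen Ω :=
    (isOpen_lt continuous_const hu.continuous).inter isOpen_ball
  set γ : ℝ → Euc N := fun t => xb + t • (y - xb) with hγ
  have hγcont : Continuous γ := by fun_prop
  set f : ℝ → ℝ := fun t => u (γ t) with hf
  have hfcont : Continuous f := hu.continuous.comp hγcont
  set c : ℝ := L * ‖y - xb‖ with hc
  have hcnonneg : 0 ≤ c := mul_nonneg hL (norm_nonneg _)
  have hγ0 : γ 0 = xb := by simp [hγ]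
  have hγ1 : γ 1 = y := by simp [hγ]
  have hγball : ∀ t ∈ Set.Icc (0:ℝ) 1, γ t ∈ ball (0 : Euc N) ρ := by
    intro t ht
    have hrw : γ t = (1 - t) • xb + t • y := by
      rw [hγ]
      module
    rw [mem_ball, dist_zero_right, hrw]
    have h1 : ‖(1 - t) • xb + t • y‖ ≤ (1 - t) * ‖xb‖ + t * ‖y‖ := by
      calc ‖(1 - t) • xb + t • y‖ ≤ ‖(1 - t) • xb‖ + ‖t • y‖ := norm_add_le _ _
        _ = (1 - t) * ‖xb‖ + t * ‖y‖ := by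
            rw [norm_smul, norm_smul, Real.norm_eq_abs, Real.norm_eq_abs,
              abs_of_nonneg (by linarith [ht.2] : (0:ℝ) ≤ 1 - t), abs_of_nonneg ht.1]
    have hfin : (1 - t) * ‖xb‖ + t * ‖y‖ < ρ := by
      rcases lt_or_eq_of_le ht.2 with h | h
      · have e1 : (1 - t) * ‖xb‖ < (1 - t) * ρ :=
          mul_lt_mul_of_pos_left hxb (by linarith)
        have e2 : t * ‖y‖ ≤ t * ρ := mul_le_mul_of_nonneg_left hy.le ht.1
        nlinarith
      · subst h; simpa using hy
    linarith
  set S : Set ℝ := {t | t ∈ Set.Icc (0:ℝ) 1 ∧ ∀ s ∈ Set.Icc 0 t, u xb - c * s ≤ f s} with hS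
  have h0S : (0:ℝ) ∈ S := by
    refine ⟨⟨le_refl 0, zero_le_one⟩, fun s hs => ?_⟩
    have : s = 0 := le_antisymm hs.2 hs.1
    subst this
    simp [hf, hγ0]
  have hSne : S.Nonempty := ⟨0, h0S⟩
  have hSbdd : BddAbove S := ⟨1, fun t ht => ht.1.2⟩
  set T : ℝ := sSup S with hT
  have hT0 : 0 ≤ T := le_csSup hSbdd h0S
  have hT1 : T ≤ 1 := csSup_le hSne fun t ht => ht.1.2
  have hlow : ∀ s, 0 ≤ s → s < T → u xb - c * s ≤ f s := by
    intro s hs0 hsT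
    obtain ⟨t, htS, hst⟩ := exists_lt_of_lt_csSup hSne hsT
    exact htS.2 s ⟨hs0, hst.le⟩
  have hTS : T ∈ S := by
    refine ⟨⟨hT0, hT1⟩, fun s hs => ?_⟩
    rcases lt_or_eq_of_le hs.2 with hlt | heq
    · exact hlow s hs.1 hlt
    · by_contra hcon
      push_neg at hcon
      have hTpos : 0 < s := by
        rcases eq_or_lt_of_le hs.1 with h | h
        · exfalso
          rw [← h] at hcon
          simp [hf, hγ0] at hcon
        · exact h
      set g : ℝ → ℝ := fun t => f t - (u xb - c * t) with hg
      have hgcont : Continuous g := by fun_prop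
      have hopen : IsOpen {t | g t < 0} := isOpen_lt hgcont continuous_const
      have hmem : s ∈ {t | g t < 0} := by
        simp only [Set.mem_setOf_eq, hg]
        linarith
      obtain ⟨σ, hσpos, hσ⟩ := Metric.isOpen_iff.1 hopen s hmem
      set s' : ℝ := max 0 (s - σ / 2) with hs'
      have hs'0 : 0 ≤ s' := le_max_left _ _
      have hs'lt : s' < s := max_lt hTpos (by linarith)
      have hs'ball : s' ∈ ball s σ := by
        rw [mem_ball, Real.dist_eq, abs_of_nonpos (by linarith)]
        have : s - σ / 2 ≤ s' := le_max_right _ _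
        linarith
      have hgneg : g s' < 0 := hσ hs'ball
      have hs'ltT : s' < T := heq ▸ hs'lt
      have := hlow s' hs'0 hs'ltT
      rw [hg] at hgneg
      simp only at hgneg
      linarith
  have hTeq : T = 1 := by
    by_contra hne
    have hTlt : T < 1 := lt_of_le_of_ne hT1 hne
    have hγT : γ T ∈ Ω := by
      refine ⟨?_, hγball T ⟨hT0, hT1⟩⟩
      have := hTS.2 T ⟨hT0, le_refl T⟩
      have hcT : c * T ≤ c := by
        nlinarith
      simp only [Set.mem_setOf_eq]
      linarith
    have hVopen : IsOpen (γ ⁻¹' Ω) := hΩopen.preimage hγcont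
    have hTV : T ∈ γ ⁻¹' Ω := hγT
    obtain ⟨σ, hσpos, hσ⟩ := Metric.isOpen_iff.1 hVopen T hTV
    set t' : ℝ := min 1 (T + σ / 2) with ht'
    have ht'T : T < t' := lt_min hTlt (by linarith)
    have ht'le1 : t' ≤ 1 := min_le_left _ _
    have ht'S : t' ∈ S := by
      refine ⟨⟨by linarith, ht'le1⟩, fun s hs => ?_⟩
      rcases le_or_gt s T with hsT | hsT
      · exact hTS.2 s ⟨hs.1, hsT⟩
      · have hsub : ∀ τ ∈ Set.Icc T s, γ τ ∈ Ω := by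
          intro τ hτ
          apply hσ
          rw [mem_ball, Real.dist_eq, abs_of_nonneg (by linarith [hτ.1])]
          have : s ≤ t' := hs.2
          have : s ≤ T + σ / 2 := le_trans hs.2 (min_le_right _ _)
          linarith [hτ.2]
        have hseg2 : segment ℝ (γ T) (γ s) ⊆ Ω := by
          intro z hz
          obtain ⟨p, q, hp, hq, hpq, hz⟩ := hz
          have : z = γ (p * T + q * s) := by
            rw [← hz, hγ]
            simp only
            have : p = 1 - q := by linarith
            subst this
            module
          rw [this]
          apply hsub
          constructor
          · nlinarith
          · nlinarith
        have hest := segment_est hu hΩopen hL hae hseg2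
        have hγdiff : γ s - γ T = (s - T) • (y - xb) := by
          rw [hγ]; module
        have hnorm : ‖γ s - γ T‖ = (s - T) * ‖y - xb‖ := by
          rw [hγdiff, norm_smul, Real.norm_eq_abs, abs_of_nonneg (by linarith)]
        rw [hnorm] at hest
        have h1 := abs_le.1 hest
        have h2 := hTS.2 T ⟨hT0, le_refl T⟩
        have : u xb - c * T - L * ((s - T) * ‖y - xb‖) ≤ f s := by
          have := h1.1
          simp only [hf] at h2 ⊢
          linarith
        have hcc : c * T + L * ((s - T) * ‖y - xb‖) = c * s := by
          rw [hc]; ring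
        linarith [this, hcc.symm.le]
    have := le_csSup hSbdd ht'S
    linarith
  have := hTS.2
  rw [hTeq] at this
  have h1 := this 1 ⟨zero_le_one, le_refl 1⟩
  simp only [hf, hγ1, mul_one] at h1
  linarith

end SegmentEstimate

theorem stmt2 {N : ℕ} (hN : 1 ≤ N) (H : Euc N × Euc N → ℝ)
    (hA1 : Continuous H)
    (hA2conv : ∀ x : Euc N, ConvexOn ℝ Set.univ fun p => H (x, p))
    (hA2coer : ∀ R : ℝ, 0 < R → ∀ C : ℝ, ∃ r : ℝ, ∀ x p : Euc N,
      ‖x‖ ≤ R → r ≤ ‖p‖ → C ≤ H (x, p))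
    (hA3 : ∃ ε > (0 : ℝ), ∃ m : ℝ,
      (∃ R : ℝ, ∀ x : Euc N, R ≤ ‖x‖ → ∀ p : Euc N, ‖p‖ ≤ ε → H (x, p) ≤ m) ∧
      (∃ x₀ : Euc N, ∀ p : Euc N, m < H (x₀, p)))
    (hcrit : sInf {a : ℝ | ∃ u : Euc N → ℝ, IsSubsol H a u} = 0)
 :
    ∀ R : ℝ, 0 < R → ∃ C : ℝ, ∀ lam : ℝ, 0 < lam →
      ∀ u : Euc N → ℝ, IsDiscSubsol H lam u → ∀ x : Euc N, ‖x‖ < R → u x ≤ C := by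
  intro R hR
  obtain ⟨ε, hε, m, ⟨R₀', hfar'⟩, x₀, hx₀⟩ := hA3
  set S : Set ℝ := {a : ℝ | ∃ u : Euc N → ℝ, IsSubsol H a u} with hSdef
  set R₀ : ℝ := max R₀' 1 with hR₀def
  have hR₀pos : (0:ℝ) < R₀ := lt_of_lt_of_le one_pos (le_max_right _ _)
  have hfar : ∀ x : Euc N, R₀ ≤ ‖x‖ → ∀ p : Euc N, ‖p‖ ≤ ε → H (x, p) ≤ m :=
    fun x hx p hp => hfar' x (le_trans (le_max_left _ _) hx) p hp
  -- the minimum of `H (x₀, ·)`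
  have hx₀cont : Continuous fun p : Euc N => H (x₀, p) :=
    hA1.comp (continuous_const.prodMk continuous_id)
  obtain ⟨r₂, hr₂⟩ := hA2coer (‖x₀‖ + 1) (by positivity) (H (x₀, 0) + 1)
  obtain ⟨ps, hpsmem, hpsmin⟩ := (isCompact_closedBall (0 : Euc N) (max r₂ 0)).exists_isMinOn
    ⟨0, mem_closedBall_self (le_max_right _ _)⟩ hx₀cont.continuousOn
  set m₁ : ℝ := H (x₀, ps) with hm₁def
  have hm₁le : ∀ p : Euc N, m₁ ≤ H (x₀, p) := by
    intro p
    by_cases hp : ‖p‖ ≤ max r₂ 0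
    · exact hpsmin (mem_closedBall_zero_iff.2 hp)
    · push_neg at hp
      have h0 : m₁ ≤ H (x₀, 0) := hpsmin (mem_closedBall_self (le_max_right _ _))
      have := hr₂ x₀ p (by linarith [norm_nonneg x₀])
        (le_trans (le_max_left _ _) hp.le)
      linarith
  have hmm₁ : m < m₁ := hx₀ ps
  -- every subsolution level is at least `m₁`
  have hSlow : ∀ a ∈ S, m₁ ≤ a := by
    rintro a ⟨u, hLip, haeu⟩
    by_contra hcon
    push_neg at hcon
    obtain ⟨r₄, hr₄⟩ := hA2coer (‖x₀‖ + 1) (by positivity) m₁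
    set D : Set (Euc N × Euc N) :=
      (closedBall x₀ 1 ×ˢ closedBall (0 : Euc N) (max r₄ 0)) ∩ H ⁻¹' (Set.Iic a) with hD
    have hDcomp : IsCompact D :=
      ((isCompact_closedBall _ _).prod (isCompact_closedBall _ _)).inter_right
        (isClosed_Iic.preimage hA1)
    have hDproj : IsCompact (Prod.fst '' D) := hDcomp.image continuous_fst
    have hx₀notin : x₀ ∉ Prod.fst '' D := by
      rintro ⟨⟨x, p⟩, ⟨⟨hx1, hp1⟩, hH⟩, hfst⟩
      simp only at hfst
      subst hfst
      exact absurd (le_trans (hm₁le p) hH) (not_le.2 hcon)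
    obtain ⟨ρ, hρpos, hρ⟩ := Metric.isOpen_iff.1 hDproj.isClosed.isOpen_compl x₀ hx₀notin
    set ρ' : ℝ := min ρ 1 with hρ'def
    have hρ'pos : 0 < ρ' := lt_min hρpos one_pos
    have hclaim : ∀ x ∈ ball x₀ ρ', ∀ p : Euc N, a < H (x, p) := by
      intro x hx p
      have hd1 : dist x x₀ < 1 := lt_of_lt_of_le (mem_ball.1 hx) (min_le_right _ _)
      have hxnorm : ‖x‖ ≤ ‖x₀‖ + 1 := by
        have h1 : ‖x - x₀‖ < 1 := by rwa [← dist_eq_norm]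
        calc ‖x‖ = ‖x₀ + (x - x₀)‖ := by congr 1; abel
          _ ≤ ‖x₀‖ + ‖x - x₀‖ := norm_add_le _ _
          _ ≤ ‖x₀‖ + 1 := by linarith
      by_cases hp : r₄ ≤ ‖p‖
      · exact lt_of_lt_of_le hcon (hr₄ x p hxnorm hp)
      · push_neg at hp
        by_contra hcon2
        push_neg at hcon2
        have hxD : (x, p) ∈ D :=
          ⟨⟨mem_closedBall.2 hd1.le,
            mem_closedBall_zero_iff.2 (le_trans hp.le (le_max_left _ _))⟩, hcon2⟩
        have hximg : x ∈ Prod.fst '' D := ⟨(x, p), hxD, rfl⟩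
        have hxball : x ∈ ball x₀ ρ :=
          mem_ball.2 (lt_of_lt_of_le (mem_ball.1 hx) (min_le_left _ _))
        exact hρ hxball hximg
    have hdiffu := locLip_ae_differentiableAt (volume : Measure (Euc N)) hLip
    have hfalse : ∀ᵐ x ∂(volume : Measure (Euc N)), ¬ (x ∈ ball x₀ ρ') := by
      filter_upwards [hdiffu, haeu] with x h1 h2 hx
      exact absurd (h2 h1) (not_le.2 (hclaim x hx _))
    have hnull : volume (ball x₀ ρ') = 0 := by
      rw [ae_iff] at hfalse
      simp at hfalse; exact hfalse
    exact absurd hnull (measure_ball_pos _ _ hρ'pos).ne'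
  have hbddS : BddBelow S := ⟨m₁, hSlow⟩
  -- `S` is nonempty : large constants are levels of the zero subsolution
  have hcont0 : Continuous fun x : Euc N => H (x, 0) :=
    hA1.comp (continuous_id.prodMk continuous_const)
  set M₀ : ℝ := sSup ((fun x : Euc N => H (x, 0)) '' closedBall 0 R₀) with hM₀def
  have hM₀bdd : BddAbove ((fun x : Euc N => H (x, 0)) '' closedBall 0 R₀) :=
    ((isCompact_closedBall _ _).image hcont0).bddAbove
  set a₀ : ℝ := max m M₀ with ha₀def
  have hSne : S.Nonempty := by
    refine ⟨a₀, (fun _ => 0), LocallyLipschitz.const 0, ae_of_all _ fun x _ => ?_⟩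
    rw [gradient_fun_const x (0:ℝ)]
    by_cases hx : ‖x‖ ≤ R₀
    · have : H (x, 0) ≤ M₀ :=
        le_csSup hM₀bdd ⟨x, mem_closedBall_zero_iff.2 hx, rfl⟩
      exact le_trans this (le_max_right _ _)
    · push_neg at hx
      have : H (x, 0) ≤ m := hfar x hx.le 0 (by simp [hε.le])
      exact le_trans this (le_max_left _ _)
  have hm₁0 : m₁ ≤ 0 := by
    have h1 : m₁ ≤ sInf S := le_csInf hSne hSlow
    rwa [hSdef, hcrit] at h1
  have hm0 : m < 0 := lt_of_lt_of_le hmm₁ hm₁0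
  -- coercivity constants on the relevant ball
  set R₁ : ℝ := R + R₀ with hR₁def
  obtain ⟨r, hrcoer⟩ := hA2coer (R₁ + 1) (by positivity) 1
  set L : ℝ := max r 0 with hLdef
  have hL0 : 0 ≤ L := le_max_right _ _
  refine ⟨L * (R + R₀) + 1, ?_⟩
  intro lam hlam u hu xb hxb
  by_contra hbig
  push_neg at hbig
  have hLip := hu.1
  have haeu := hu.2
  have hdiffae := locLip_ae_differentiableAt (volume : Measure (Euc N)) hLip
  have hnormgrad : ∀ x : Euc N, ‖gradient u x‖ = ‖fderiv ℝ u x‖ := by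
    intro x
    rw [gradient]
    exact LinearIsometryEquiv.norm_map _ _
  -- a.e. gradient bound on the positivity set
  have haeL : ∀ᵐ x ∂(volume : Measure (Euc N)),
      x ∈ ({x | 0 < u x} ∩ ball (0 : Euc N) (R₁ + 1)) →
        DifferentiableAt ℝ u x → ‖fderiv ℝ u x‖ ≤ L := by
    filter_upwards [haeu] with x hineq hmem hdiff
    by_contra hg
    push_neg at hg
    have h1 : 1 ≤ H (x, gradient u x) := by
      refine hrcoer x (gradient u x) ?_ ?_
      · have := mem_ball_zero_iff.1 hmem.2
        exact this.le
      · rw [hnormgrad x]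
        exact le_trans (le_max_left r 0) hg.le
    have h2 : lam * u x + H (x, gradient u x) ≤ 0 := hineq hdiff
    have h3 : 0 < lam * u x := mul_pos hlam hmem.1
    linarith
  -- propagation of largeness
  have hprop : ∀ y : Euc N, ‖y‖ ≤ R₀ → 1 < u y := by
    intro y hy
    have hyx : ‖y - xb‖ ≤ R₀ + R :=
      calc ‖y - xb‖ ≤ ‖y‖ + ‖xb‖ := norm_sub_le _ _
        _ ≤ R₀ + R := add_le_add hy hxb.le
    have hmul : L * ‖y - xb‖ ≤ L * (R₀ + R) := mul_le_mul_of_nonneg_left hyx hL0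
    have hcomm : L * (R₀ + R) = L * (R + R₀) := by ring
    have hprop' := propagate_aux hLip hL0 haeL (xb := xb) (y := y)
      (by rw [hR₁def]; linarith) (by rw [hR₁def]; linarith) (by linarith)
    linarith
  -- the truncated function is a subsolution at a negative level
  set θ : ℝ := max m (-(lam/2)) with hθdef
  have hθneg : θ < 0 := max_lt hm0 (by linarith)
  set w : Euc N → ℝ := fun x => max (u x - 1/2) 0 with hwdef
  have hsubLip : LocallyLipschitz (fun x : Euc N => u x - 1/2) := by
    have h2 : LipschitzWith 1 (fun t : ℝ => t - 1/2) := by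
      apply LipschitzWith.of_dist_le_mul
      intro a b
      rw [Real.dist_eq, Real.dist_eq]
      simp only [NNReal.coe_one, one_mul]
      ring_nf
      exact le_refl _
    exact h2.locallyLipschitz.comp hLip
  have hwLip : LocallyLipschitz w := hsubLip.max_const 0
  have hwS : θ ∈ S := by
    refine ⟨w, hwLip, ?_⟩
    filter_upwards [haeu, hdiffae] with x hineq hdiff hdiffw
    by_cases hcase : 1/2 ≤ u x
    · have hfd : fderiv ℝ w x = fderiv ℝ u x := by
        rcases eq_or_lt_of_le hcase with hceq | hclt
        · -- touching case : local minimum argument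
          have hh : ∀ y : Euc N, 0 ≤ w y - (u y - 1/2) := fun y => by
            have := le_max_left (u y - 1/2) (0:ℝ)
            simp only [hwdef]
            linarith
          have hx0 : w x - (u x - 1/2) = 0 := by
            simp only [hwdef, ← hceq]
            norm_num
          have hmin : IsLocalMin (fun y : Euc N => w y - (u y - 1/2)) x := by
            apply Filter.Eventually.of_forall
            intro y
            simp only
            rw [hx0]
            exact hh y
          have h0 := hmin.fderiv_eq_zero
          have hdsub : fderiv ℝ (fun y : Euc N => w y - (u y - 1/2)) x =
              fderiv ℝ w x - fderiv ℝ (fun y : Euc N => u y - 1/2) x :=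
            fderiv_sub hdiffw (hdiff.sub_const _)
          rw [hdsub, fderiv_sub_const] at h0
          exact sub_eq_zero.1 h0
        · -- interior case : `w` agrees with `u - 1/2` near `x`
          have hopen : IsOpen {y : Euc N | 1/2 < u y} :=
            isOpen_lt continuous_const hLip.continuous
          have hev : w =ᶠ[nhds x] fun y => u y - 1/2 := by
            filter_upwards [hopen.mem_nhds hclt] with y hy
            have : (1:ℝ)/2 < u y := hy
            simp only [hwdef]
            exact max_eq_left (by linarith)
          rw [hev.fderiv_eq, fderiv_sub_const]
      have hgrad : gradient w x = gradient u x := by rw [gradient, gradient, hfd]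
      rw [hgrad]
      have h1 := hineq hdiff
      have hux : lam * (1/2) ≤ lam * u x := mul_le_mul_of_nonneg_left hcase hlam.le
      calc H (x, gradient u x) ≤ -(lam * u x) := by linarith
        _ ≤ -(lam/2) := by linarith
        _ ≤ θ := le_max_right _ _
    · push_neg at hcase
      have hxfar : R₀ ≤ ‖x‖ := by
        by_contra hles
        push_neg at hles
        exact absurd (hprop x hles.le) (by linarith)
      have hopen : IsOpen {y : Euc N | u y < 1/2} :=
        isOpen_lt hLip.continuous continuous_const
      have hev : w =ᶠ[nhds x] fun _ => (0:ℝ) := by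
        filter_upwards [hopen.mem_nhds hcase] with y hy
        have : u y < 1/2 := hy
        simp only [hwdef]
        exact max_eq_right (by linarith)
      have hfd : fderiv ℝ w x = 0 := by
        rw [hev.fderiv_eq]
        exact fderiv_const_apply 0
      have hgrad : gradient w x = 0 := by rw [gradient, hfd, map_zero]
      rw [hgrad]
      calc H (x, 0) ≤ m := hfar x hxfar 0 (by simp [hε.le])
        _ ≤ θ := le_max_left _ _
  have hcontra := csInf_le hbddS hwS
  rw [hSdef, hcrit] at hcontra
  linarith

end
end

section
/- Given an open ball B ⊂ ℝ^N, there exists R > 1 such that: for every ε > 0, every locally Lipschitz u : B → ℝ satisfying Du(x)·q ≤ L(x,q) − ε for a.e. x ∈ B and every q with |q| ≤ R in fact satisfies Du(x)·q ≤ L(x,q) − ε for a.e. x ∈ B and every q ∈ ℝ^N (i.e., u is a strict subsolution of H = 0 in B: H(x,Du(x)) ≤ −ε for a.e. x ∈ B). -/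
open MeasureTheory Set
open scoped RealInnerProductSpace

noncomputable section

lemma bddAbove_lag_aux {N : ℕ} (H : Euc N × Euc N → ℝ) (hA1 : Continuous H)
    (hsl : ∀ x : Euc N, ∀ C : ℝ, ∃ r : ℝ, ∀ p : Euc N, r ≤ ‖p‖ → C * ‖p‖ ≤ H (x, p))
    (x q : Euc N) :
    BddAbove (Set.range fun p : Euc N => ⟪p, q⟫ - H (x, p)) := by
  obtain ⟨r, hr⟩ := hsl x (‖q‖ + 1)
  set r' := max r 0 with hr'
  have hr'0 : 0 ≤ r' := le_max_right _ _
  have hcont : Continuous fun p : Euc N => H (x, p) :=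
    hA1.comp (continuous_const.prodMk continuous_id)
  obtain ⟨pm, hpm, hmin⟩ := (isCompact_closedBall (0 : Euc N) r').exists_isMinOn
    ⟨0, by simpa using hr'0⟩ hcont.continuousOn
  refine ⟨max (r' * ‖q‖ - H (x, pm)) 0, ?_⟩
  rintro y ⟨p, rfl⟩
  by_cases hp : ‖p‖ ≤ r'
  · have h1 : ⟪p, q⟫ ≤ ‖p‖ * ‖q‖ := real_inner_le_norm p q
    have h2 : H (x, pm) ≤ H (x, p) := hmin (by simpa [Metric.mem_closedBall, dist_zero_right] using hp)
    have h3 : ‖p‖ * ‖q‖ ≤ r' * ‖q‖ := mul_le_mul_of_nonneg_right hp (norm_nonneg q)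
    have : ⟪p, q⟫ - H (x, p) ≤ r' * ‖q‖ - H (x, pm) := by linarith
    exact this.trans (le_max_left _ _)
  · push_neg at hp
    have hrp : r ≤ ‖p‖ := (le_max_left r 0).trans hp.le
    have h1 : ⟪p, q⟫ ≤ ‖p‖ * ‖q‖ := real_inner_le_norm p q
    have h2 := hr p hrp
    have : ⟪p, q⟫ - H (x, p) ≤ 0 := by nlinarith [norm_nonneg p]
    exact this.trans (le_max_right _ _)

lemma loc_superlinear {N : ℕ} (H : Euc N × Euc N → ℝ) (hA1 : Continuous H)
    (hA2conv : ∀ x : Euc N, ConvexOn ℝ Set.univ fun p => H (x, p))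
    (hsl : ∀ x : Euc N, ∀ C : ℝ, ∃ r : ℝ, ∀ p : Euc N, r ≤ ‖p‖ → C * ‖p‖ ≤ H (x, p))
    (x₁ : Euc N) :
    ∃ (U : Set (Euc N)) (D : ℝ), U ∈ nhds x₁ ∧ 0 ≤ D ∧
      ∀ x ∈ U, ∀ p : Euc N, 2 * ‖p‖ - D ≤ H (x, p) := by
  obtain ⟨r₀, hr₀⟩ := hsl x₁ (|H (x₁, 0)| + 3)
  set r := max r₀ 1 with hrdef
  have hr1 : (1 : ℝ) ≤ r := le_max_right _ _
  have hfc : Continuous fun z : Euc N × Euc N => H z - H (z.1, 0) :=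
    hA1.sub (hA1.comp (continuous_fst.prodMk continuous_const))
  set O := {z : Euc N × Euc N | 2 * r + 1 / 2 < H z - H (z.1, 0)} with hO
  have hOopen : IsOpen O := isOpen_lt continuous_const hfc
  have hsub : ({x₁} : Set (Euc N)) ×ˢ Metric.sphere (0 : Euc N) r ⊆ O := by
    rintro ⟨x, q⟩ ⟨hx, hq⟩
    simp only [mem_singleton_iff] at hx
    subst hx
    have hqn : ‖q‖ = r := by simpa using hq
    have hkey := hr₀ q (by rw [hqn]; exact le_max_left _ _)
    rw [hqn] at hkey
    have h₀ := abs_nonneg (H (x, 0))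
    have h₁ := le_abs_self (H (x, 0))
    show 2 * r + 1 / 2 < H (x, q) - H (x, 0)
    nlinarith
  obtain ⟨u, v, hu, hv, hxu, hSv, huv⟩ :=
    generalized_tube_lemma isCompact_singleton (isCompact_sphere (0 : Euc N) r) hOopen hsub
  obtain ⟨zm, hzm, hmin⟩ :=
    ((isCompact_closedBall x₁ 1).prod (isCompact_closedBall (0 : Euc N) r)).exists_isMinOn
      ⟨(x₁, 0), by constructor <;> simp <;> linarith⟩ hA1.continuousOn
  set m := H zm with hm
  refine ⟨u ∩ Metric.ball x₁ 1, max (2 * r - m) 0,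
    Filter.inter_mem (hu.mem_nhds (hxu rfl)) (Metric.ball_mem_nhds x₁ one_pos),
    le_max_right _ _, ?_⟩
  rintro x ⟨hxu', hxball⟩ p
  have hxcb : x ∈ Metric.closedBall x₁ 1 := Metric.ball_subset_closedBall hxball
  have hm0 : m ≤ H (x, 0) := hmin ⟨hxcb, by simp; linarith⟩
  have hDge : 2 * r - m ≤ max (2 * r - m) 0 := le_max_left _ _
  by_cases hp : ‖p‖ ≤ r
  · have hHp : m ≤ H (x, p) := hmin ⟨hxcb, by simpa [Metric.mem_closedBall, dist_zero_right] using hp⟩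
    linarith
  · push_neg at hp
    have hpn : (0 : ℝ) < ‖p‖ := lt_trans (by linarith) hp
    set t := r / ‖p‖ with ht
    have ht0 : 0 < t := div_pos (by linarith) hpn
    have ht1 : t ≤ 1 := by rw [ht, div_le_one hpn]; exact hp.le
    have htp : t * ‖p‖ = r := div_mul_cancel₀ _ hpn.ne'
    have hqqn : ‖t • p‖ = r := by
      rw [norm_smul, Real.norm_eq_abs, abs_of_pos ht0, htp]
    have hOmem : (x, t • p) ∈ O :=
      huv ⟨hxu', hSv (by simpa [mem_sphere_zero_iff_norm] using hqqn)⟩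
    have hOx : 2 * r + 1 / 2 < H (x, t • p) - H (x, 0) := hOmem
    have hconv := (hA2conv x).2 (mem_univ p) (mem_univ (0 : Euc N)) ht0.le
      (by linarith : (0:ℝ) ≤ 1 - t) (by ring)
    simp only [smul_zero, add_zero, smul_eq_mul] at hconv
    have key : t * (H (x, 0) + 2 * ‖p‖) ≤ t * H (x, p) := by nlinarith
    have key2 : H (x, 0) + 2 * ‖p‖ ≤ H (x, p) := le_of_mul_le_mul_left key ht0
    linarith

theorem stmt7 {N : ℕ} (hN : 1 ≤ N) (H : Euc N × Euc N → ℝ)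
    (hA1 : Continuous H)
    (hA2conv : ∀ x : Euc N, ConvexOn ℝ Set.univ fun p => H (x, p))
    (hA2coer : ∀ R : ℝ, 0 < R → ∀ C : ℝ, ∃ r : ℝ, ∀ x p : Euc N,
      ‖x‖ ≤ R → r ≤ ‖p‖ → C ≤ H (x, p))
    (hA3 : ∃ ε > (0 : ℝ), ∃ m : ℝ,
      (∃ R : ℝ, ∀ x : Euc N, R ≤ ‖x‖ → ∀ p : Euc N, ‖p‖ ≤ ε → H (x, p) ≤ m) ∧
      (∃ x₀ : Euc N, ∀ p : Euc N, m < H (x₀, p)))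
    (hcrit : sInf {a : ℝ | ∃ u : Euc N → ℝ, IsSubsol H a u} = 0)
    (hsl : ∀ x : Euc N, ∀ C : ℝ, ∃ r : ℝ, ∀ p : Euc N, r ≤ ‖p‖ → C * ‖p‖ ≤ H (x, p))
    (x₀ : Euc N) (ρ : ℝ) (hρ : 0 < ρ) :
    ∃ R : ℝ, 1 < R ∧ ∀ ε : ℝ, 0 < ε → ∀ u : Euc N → ℝ,
      LocallyLipschitzOn (Metric.ball x₀ ρ) u →
      (∀ᵐ x : Euc N ∂volume, x ∈ Metric.ball x₀ ρ → DifferentiableAt ℝ u x →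
        ∀ q : Euc N, ‖q‖ ≤ R → fderiv ℝ u x q ≤ Lag H (x, q) - ε) →
      (∀ᵐ x : Euc N ∂volume, x ∈ Metric.ball x₀ ρ → DifferentiableAt ℝ u x →
        ∀ q : Euc N, fderiv ℝ u x q ≤ Lag H (x, q) - ε) := by
  classical
  choose U Dfn hUnhds hD0 hDb using loc_superlinear H hA1 hA2conv hsl
  set KK := Metric.closedBall x₀ ρ with hKK
  have hKKc : IsCompact KK := isCompact_closedBall x₀ ρ
  obtain ⟨t, htK, hcov⟩ := hKKc.elim_nhds_subcover U (fun x _ => hUnhds x)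
  have hx₀K : x₀ ∈ KK := Metric.mem_closedBall_self hρ.le
  obtain ⟨i, hit, hx₀i⟩ := Set.mem_iUnion₂.mp (hcov hx₀K)
  have htne : t.Nonempty := ⟨i, hit⟩
  set D := t.sup' htne Dfn with hD
  have hDglob : ∀ x ∈ KK, ∀ p : Euc N, 2 * ‖p‖ - D ≤ H (x, p) := by
    intro x hx p
    obtain ⟨j, hjt, hxj⟩ := Set.mem_iUnion₂.mp (hcov hx)
    have h1 := hDb j x hxj p
    have h2 : Dfn j ≤ D := Finset.le_sup' Dfn hjt
    linarith
  have hD0' : (0 : ℝ) ≤ D := (hD0 i).trans (Finset.le_sup' Dfn hit)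
  set A := D / 2 + 1 with hA
  have hA0 : (0 : ℝ) < A := by rw [hA]; linarith
  obtain ⟨zM, hzM, hMax⟩ :=
    (hKKc.prod (isCompact_closedBall (0 : Euc N) A)).exists_isMaxOn
      ⟨(x₀, 0), hx₀K, by simp [hA0.le]⟩ hA1.continuousOn
  set M := H zM with hM
  refine ⟨max 2 M + 1, by have := le_max_left (2:ℝ) M; linarith, ?_⟩
  intro ε hε u hLip hae
  filter_upwards [hae] with x hx hxball hdiff q
  by_cases hqR : ‖q‖ ≤ max 2 M + 1
  · exact hx hxball hdiff q hqR
  push_neg at hqR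
  have hxKK : x ∈ KK := Metric.ball_subset_closedBall hxball
  have hq2 : (2 : ℝ) < ‖q‖ := by have := le_max_left (2:ℝ) M; linarith
  have hqM : M + 1 < ‖q‖ := by have := le_max_right (2:ℝ) M; linarith
  have hq0 : (0 : ℝ) < ‖q‖ := by linarith
  set l := fderiv ℝ u x with hl
  set q' := ((2 : ℝ) / ‖q‖) • q with hq'def
  have hq'n : ‖q'‖ = 2 := by
    rw [hq'def, norm_smul, Real.norm_eq_abs, abs_of_pos (by positivity),
      div_mul_cancel₀ _ hq0.ne']
  have h1 : l q' ≤ Lag H (x, q') - ε := by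
    refine hx hxball hdiff q' ?_
    rw [hq'n]; have := le_max_left (2:ℝ) M; linarith
  have h2 : Lag H (x, q') ≤ D := by
    show sSup (Set.range fun p : Euc N => ⟪p, q'⟫ - H (x, p)) ≤ D
    apply csSup_le (Set.range_nonempty _)
    rintro y ⟨p, rfl⟩
    have hip : ⟪p, q'⟫ ≤ ‖p‖ * ‖q'‖ := real_inner_le_norm p q'
    rw [hq'n] at hip
    have := hDglob x hxKK p
    show ⟪p, q'⟫ - H (x, p) ≤ D
    linarith
  have h3 : l q = (‖q‖ / 2) * l q' := by
    have hqq : (‖q‖ / 2) • q' = q := by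
      rw [hq'def, smul_smul, show ‖q‖ / 2 * (2 / ‖q‖) = 1 by field_simp, one_smul]
    calc l q = l ((‖q‖ / 2) • q') := by rw [hqq]
    _ = (‖q‖ / 2) * l q' := by rw [l.map_smul, smul_eq_mul]
  have h4 : l q ≤ (‖q‖ / 2) * (D - ε) := by
    rw [h3]
    exact mul_le_mul_of_nonneg_left (by linarith) (by positivity)
  have h5 : A * ‖q‖ - M ≤ Lag H (x, q) := by
    set p₀ := (A / ‖q‖) • q with hp₀
    have hp₀n : ‖p₀‖ = A := by
      rw [hp₀, norm_smul, Real.norm_eq_abs, abs_of_pos (by positivity),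
        div_mul_cancel₀ _ hq0.ne']
    have hip : ⟪p₀, q⟫ = A * ‖q‖ := by
      rw [hp₀, real_inner_smul_left, real_inner_self_eq_norm_mul_norm]
      field_simp
    have hHp : H (x, p₀) ≤ M :=
      hMax ⟨hxKK, by simpa [Metric.mem_closedBall, dist_zero_right] using hp₀n.le⟩
    have hle : ⟪p₀, q⟫ - H (x, p₀) ≤ Lag H (x, q) := by
      show _ ≤ sSup (Set.range fun p : Euc N => ⟪p, q⟫ - H (x, p))
      exact le_csSup (bddAbove_lag_aux H hA1 hsl x q) ⟨p₀, rfl⟩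
    rw [hip] at hle
    linarith
  have hεq : 0 < ε * (‖q‖ - 2) := mul_pos hε (by linarith)
  rw [hA] at h5
  show l q ≤ Lag H (x, q) - ε
  nlinarith [h4, h5, hεq, hqM]

end
end

section
/- Let z ∈ ℝ^N, λ > 0, let μ be a (λ,z)-Mather measure, and let ψ : ℝ^N → ℝ be a C¹ function that is constant outside a compact set. Then ∫ (λ ψ(x) + Dψ(x)·q) dμ(x,q) = λ ψ(z). -/
open MeasureTheory Set
open scoped RealInnerProductSpace

noncomputable section

/-- Fenchel inequality direction: each `⟪p,q⟫ - H(x,p)` is below the Lagrangian. -/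
lemma lag_ge_aux {N : ℕ} (H : Euc N × Euc N → ℝ) (hA1 : Continuous H)
    (hsl : ∀ x : Euc N, ∀ C : ℝ, ∃ r : ℝ, ∀ p : Euc N, r ≤ ‖p‖ → C * ‖p‖ ≤ H (x, p))
    (x q p : Euc N) : ⟪p, q⟫ - H (x, p) ≤ Lag H (x, q) := by
  refine le_csSup ?_ (Set.mem_range_self p)
  obtain ⟨r, hr⟩ := hsl x (‖q‖ + 1)
  have hxc : Continuous fun p : Euc N => H (x, p) :=
    hA1.comp (continuous_const.prodMk continuous_id)
  obtain ⟨B, hB⟩ := (isCompact_closedBall (0 : Euc N) (max r 0)).exists_bound_of_continuousOn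
    hxc.continuousOn
  have hB0 : 0 ≤ B := (norm_nonneg _).trans (hB 0 (Metric.mem_closedBall_self (le_max_right _ _)))
  refine ⟨max r 0 * ‖q‖ + B, ?_⟩
  rintro y ⟨p', rfl⟩
  show (⟪p', q⟫ : ℝ) - H (x, p') ≤ max r 0 * ‖q‖ + B
  by_cases hp : ‖p'‖ ≤ max r 0
  · have h1 : ⟪p', q⟫ ≤ max r 0 * ‖q‖ := by
      calc ⟪p', q⟫ ≤ ‖p'‖ * ‖q‖ := real_inner_le_norm _ _
        _ ≤ max r 0 * ‖q‖ := by gcongr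
    have h2 : -B ≤ H (x, p') := by
      have := hB p' (mem_closedBall_zero_iff.2 hp)
      rw [Real.norm_eq_abs] at this
      linarith [abs_le.1 this]
    linarith
  · push_neg at hp
    have hrp : r ≤ ‖p'‖ := (le_max_left r 0).trans hp.le
    have h1 : ⟪p', q⟫ ≤ ‖p'‖ * ‖q‖ := real_inner_le_norm _ _
    have h2 : (‖q‖ + 1) * ‖p'‖ ≤ H (x, p') := hr p' hrp
    nlinarith [norm_nonneg p', norm_nonneg q,
      mul_nonneg (le_max_right r 0) (norm_nonneg q), hB0]

/-- Key half: integrability and the one-sided inequality `λ ψ(z) ≤ ∫ (λψ + Dψ·q) dμ`. -/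
lemma key_half {N : ℕ} (H : Euc N × Euc N → ℝ) (hA1 : Continuous H)
    (hsl : ∀ x : Euc N, ∀ C : ℝ, ∃ r : ℝ, ∀ p : Euc N, r ≤ ‖p‖ → C * ‖p‖ ≤ H (x, p))
    (lam : ℝ) (hlam : 0 < lam) (z : Euc N)
    (μ : Measure (Euc N × Euc N)) [IsProbabilityMeasure μ]
    (hLint : Integrable (Lag H) μ)
    (hM : ∀ Φ : Euc N × Euc N → ℝ, Continuous Φ → BddBelow (Set.range Φ) →
      ∀ u : Euc N → ℝ, DiscSubsolFor lam Φ u →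
        (Integrable Φ μ → lam * u z ≤ ∫ w, Φ w ∂μ))
    (ψ : Euc N → ℝ) (hψ : ContDiff ℝ 1 ψ)
    (C : Set (Euc N)) (hC : IsCompact C) (c : ℝ) (hcc : ∀ x ∉ C, ψ x = c) :
    Integrable (fun w : Euc N × Euc N => lam * ψ w.1 + fderiv ℝ ψ w.1 w.2) μ ∧
      lam * ψ z ≤ ∫ w : Euc N × Euc N, (lam * ψ w.1 + fderiv ℝ ψ w.1 w.2) ∂μ := by
  set g : Euc N × Euc N → ℝ := fun w => lam * ψ w.1 + fderiv ℝ ψ w.1 w.2 with hgdef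
  -- the derivative vanishes off `C`
  have hD0 : ∀ x ∉ C, fderiv ℝ ψ x = 0 := by
    intro x hx
    have hev : ψ =ᶠ[nhds x] fun _ => c := by
      filter_upwards [hC.isClosed.isOpen_compl.mem_nhds hx] with y hy using hcc y hy
    rw [hev.fderiv_eq]
    exact fderiv_const_apply c
  -- bound on ψ
  obtain ⟨B₁, hB₁⟩ := hC.exists_bound_of_continuousOn hψ.continuous.continuousOn
  set C₁ : ℝ := max B₁ |c| with hC₁def
  have hC₁ : ∀ x, |ψ x| ≤ C₁ := by
    intro x
    by_cases hx : x ∈ C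
    · exact le_trans (hB₁ x hx) (le_max_left _ _)
    · rw [hcc x hx]; exact le_max_right _ _
  have hC₁0 : 0 ≤ C₁ := (abs_nonneg _).trans (hC₁ z)
  -- bound on the derivative
  obtain ⟨B₂, hB₂⟩ := hC.exists_bound_of_continuousOn (hψ.continuous_fderiv one_ne_zero).continuousOn
  set a : ℝ := max B₂ 0 + 1 with hadef
  have ha0 : 0 < a := by positivity
  have hDa : ∀ x, ‖fderiv ℝ ψ x‖ ≤ a := by
    intro x
    by_cases hx : x ∈ C
    · exact le_trans (hB₂ x hx) (by simp [hadef]; linarith [le_max_left B₂ (0:ℝ)])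
    · rw [hD0 x hx]; simp [hadef]; positivity
  -- bound on H on the relevant compact set
  obtain ⟨K₀, hK₀⟩ := (hC.prod (isCompact_closedBall (0 : Euc N) a)).exists_bound_of_continuousOn
    hA1.continuousOn
  set K : ℝ := max K₀ 0 with hKdef
  have hK0 : 0 ≤ K := le_max_right _ _
  -- lower bound on Lag over C
  have hLlow : ∀ x ∈ C, ∀ q : Euc N, a * ‖q‖ - K ≤ Lag H (x, q) := by
    intro x hx q
    by_cases hq : q = 0
    · subst hq
      have h1 := lag_ge_aux H hA1 hsl x 0 0
      have h2 : ‖H (x, (0 : Euc N))‖ ≤ K₀ :=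
        hK₀ (x, 0) ⟨hx, Metric.mem_closedBall_self ha0.le⟩
      rw [Real.norm_eq_abs] at h2
      simp only [inner_zero_left, zero_sub] at h1
      have := (abs_le.1 h2).2
      simp only [norm_zero, mul_zero, zero_sub]
      have hKK : K₀ ≤ K := le_max_left _ _
      linarith
    · have hq0 : (0 : ℝ) < ‖q‖ := norm_pos_iff.2 hq
      set p : Euc N := (a / ‖q‖) • q with hpdef
      have hnp : ‖p‖ = a := by
        rw [hpdef, norm_smul, Real.norm_eq_abs, abs_of_pos (by positivity)]
        field_simp
      have hip : ⟪p, q⟫ = a * ‖q‖ := by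
        rw [hpdef, real_inner_smul_left, real_inner_self_eq_norm_mul_norm]
        field_simp
      have h1 := lag_ge_aux H hA1 hsl x q p
      have h2 : ‖H (x, p)‖ ≤ K₀ :=
        hK₀ (x, p) ⟨hx, mem_closedBall_zero_iff.2 hnp.le⟩
      rw [Real.norm_eq_abs] at h2
      have hKK : K₀ ≤ K := le_max_left _ _
      have := (abs_le.1 h2).2
      rw [hip] at h1
      linarith
  -- continuity of g
  have hgc : Continuous g := by
    refine (continuous_const.mul (hψ.continuous.comp continuous_fst)).add ?_
    exact (((hψ.continuous_fderiv one_ne_zero).comp continuous_fst).clm_apply continuous_snd)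
  -- pointwise bound on g
  have hgb : ∀ w : Euc N × Euc N, ‖g w‖ ≤ lam * C₁ + K + |Lag H w| := by
    intro w
    rw [Real.norm_eq_abs]
    have habs : |g w| ≤ lam * |ψ w.1| + ‖fderiv ℝ ψ w.1‖ * ‖w.2‖ := by
      refine (abs_add_le _ _).trans ?_
      have h1 : |lam * ψ w.1| = lam * |ψ w.1| := by
        rw [abs_mul, abs_of_pos hlam]
      have h2 : |fderiv ℝ ψ w.1 w.2| ≤ ‖fderiv ℝ ψ w.1‖ * ‖w.2‖ := by
        rw [← Real.norm_eq_abs]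
        exact (fderiv ℝ ψ w.1).le_opNorm w.2
      linarith [h1.le]
    by_cases hx : w.1 ∈ C
    · have h3 : ‖fderiv ℝ ψ w.1‖ * ‖w.2‖ ≤ a * ‖w.2‖ := by
        gcongr; exact hDa w.1
      have h4 : a * ‖w.2‖ ≤ Lag H w + K := by
        have := hLlow w.1 hx w.2
        rw [Prod.mk.eta] at this
        linarith
      have h5 : Lag H w ≤ |Lag H w| := le_abs_self _
      have h6 : lam * |ψ w.1| ≤ lam * C₁ := by gcongr; exact hC₁ w.1
      linarith
    · have hz : fderiv ℝ ψ w.1 = 0 := hD0 w.1 hx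
      have : |g w| ≤ lam * C₁ := by
        have : g w = lam * ψ w.1 := by simp [hgdef, hz]
        rw [this, abs_mul, abs_of_pos hlam]
        gcongr; exact hC₁ w.1
      have := abs_nonneg (Lag H w)
      linarith
  -- integrability of g
  have hh : Integrable (fun w => lam * C₁ + K + |Lag H w|) μ :=
    (integrable_const _).add hLint.abs
  have hgi : Integrable g μ := by
    refine hh.mono hgc.aestronglyMeasurable (Filter.Eventually.of_forall fun w => ?_)
    rw [Real.norm_eq_abs (lam * C₁ + K + |Lag H w|),
      abs_of_nonneg (by positivity)]
    exact hgb w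
  refine ⟨hgi, ?_⟩
  -- the truncated Lagrangians
  have hstep : ∀ n : ℕ, lam * ψ z ≤ ∫ w, max (g w) (-(n : ℝ)) ∂μ := by
    intro n
    refine hM _ (hgc.max continuous_const)
      ⟨-(n : ℝ), by rintro y ⟨w, rfl⟩; exact le_max_right _ _⟩ ψ
      ⟨hψ.locallyLipschitz, Filter.Eventually.of_forall fun x _ q => le_max_left _ _⟩ ?_
    refine ((integrable_const ((n : ℝ))).add hgi.abs).mono
      (hgc.max continuous_const).aestronglyMeasurable
      (Filter.Eventually.of_forall fun w => ?_)
    simp only [Pi.add_apply, Real.norm_eq_abs]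
    rw [abs_of_nonneg (show (0:ℝ) ≤ (n : ℝ) + |g w| by positivity)]
    refine abs_le.2 ⟨?_, ?_⟩
    · have := neg_abs_le (g w)
      have := le_max_left (g w) (-(n : ℝ))
      have := Nat.cast_nonneg (α := ℝ) n
      linarith
    · refine max_le ?_ ?_
      · linarith [le_abs_self (g w), Nat.cast_nonneg (α := ℝ) n]
      · linarith [abs_nonneg (g w), Nat.cast_nonneg (α := ℝ) n]
  -- dominated convergence
  have htend : Filter.Tendsto (fun n : ℕ => ∫ w, max (g w) (-(n : ℝ)) ∂μ)
      Filter.atTop (nhds (∫ w, g w ∂μ)) := by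
    refine MeasureTheory.tendsto_integral_of_dominated_convergence (fun w => |g w|)
      (fun n => (hgc.max continuous_const).aestronglyMeasurable) hgi.abs
      (fun n => Filter.Eventually.of_forall fun w => ?_)
      (Filter.Eventually.of_forall fun w => ?_)
    · rw [Real.norm_eq_abs]
      refine abs_le.2 ⟨(neg_abs_le _).trans (le_max_left _ _),
        max_le (le_abs_self _) ((neg_nonpos.2 (Nat.cast_nonneg n)).trans (abs_nonneg _))⟩
    · obtain ⟨m, hm⟩ := exists_nat_ge (-(g w))
      refine tendsto_const_nhds.congr' ?_
      filter_upwards [Filter.eventually_ge_atTop m] with n hn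
      refine (max_eq_left ?_).symm
      have : (m : ℝ) ≤ (n : ℝ) := Nat.cast_le.2 hn
      linarith
  exact ge_of_tendsto htend (Filter.Eventually.of_forall hstep)

theorem stmt11 {N : ℕ} (hN : 1 ≤ N) (H : Euc N × Euc N → ℝ)
    (hA1 : Continuous H)
    (hA2conv : ∀ x : Euc N, ConvexOn ℝ Set.univ fun p => H (x, p))
    (hA2coer : ∀ R : ℝ, 0 < R → ∀ C : ℝ, ∃ r : ℝ, ∀ x p : Euc N,
      ‖x‖ ≤ R → r ≤ ‖p‖ → C ≤ H (x, p))
    (hA3 : ∃ ε > (0 : ℝ), ∃ m : ℝ,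
      (∃ R : ℝ, ∀ x : Euc N, R ≤ ‖x‖ → ∀ p : Euc N, ‖p‖ ≤ ε → H (x, p) ≤ m) ∧
      (∃ x₀ : Euc N, ∀ p : Euc N, m < H (x₀, p)))
    (hcrit : sInf {a : ℝ | ∃ u : Euc N → ℝ, IsSubsol H a u} = 0)
    (hsl : ∀ x : Euc N, ∀ C : ℝ, ∃ r : ℝ, ∀ p : Euc N, r ≤ ‖p‖ → C * ‖p‖ ≤ H (x, p))
    (um : ℝ → Euc N → ℝ)
    (hum : ∀ lam : ℝ, 0 < lam → ∀ x : Euc N,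
      um lam x = sSup {r : ℝ | ∃ v : Euc N → ℝ, IsDiscSubsol H lam v ∧ v x = r})
    (z : Euc N) (lam : ℝ) (hlam : 0 < lam)
    (μ : Measure (Euc N × Euc N)) (hμ : DiscMatherMeasure H lam z (um lam) μ)
    (ψ : Euc N → ℝ) (hψ : ContDiff ℝ 1 ψ)
    (hconst : ∃ C : Set (Euc N), IsCompact C ∧ ∃ c : ℝ, ∀ x ∉ C, ψ x = c) :
    Integrable (fun w : Euc N × Euc N => lam * ψ w.1 + fderiv ℝ ψ w.1 w.2) μ ∧
    (∫ w : Euc N × Euc N, (lam * ψ w.1 + fderiv ℝ ψ w.1 w.2) ∂μ) = lam * ψ z := by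
  obtain ⟨hprob, hLint, _, hM⟩ := hμ
  haveI := hprob
  obtain ⟨C, hC, c, hcc⟩ := hconst
  have h1 := key_half H hA1 hsl lam hlam z μ hLint hM ψ hψ C hC c hcc
  have h2 := key_half H hA1 hsl lam hlam z μ hLint hM (fun x => -ψ x) hψ.neg C hC (-c)
    (fun x hx => by simp [hcc x hx])
  have hneg : (fun w : Euc N × Euc N =>
      lam * (fun x => -ψ x) w.1 + fderiv ℝ (fun x => -ψ x) w.1 w.2)
      = fun w : Euc N × Euc N => -(lam * ψ w.1 + fderiv ℝ ψ w.1 w.2) := by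
    funext w
    rw [fderiv_fun_neg]
    simp
    ring
  refine ⟨h1.1, le_antisymm ?_ h1.2⟩
  have h2' := h2.2
  rw [hneg, integral_neg] at h2'
  have h2'' : lam * (-ψ z) ≤ -∫ w : Euc N × Euc N, (lam * ψ w.1 + fderiv ℝ ψ w.1 w.2) ∂μ := h2'
  linarith

end
end
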